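/- Subsequence summation lemma: let φ : ℕ → ℝ_{>0} be increasing with φ(n) → ∞, let {a_k} ⊆ ℝ be such that the sequence (1/φ(n))·∑_{k=0}^n |a_k| is bounded, and let k_0 < k_1 < ⋯ be an infinite increasing sequence of positive integers such that φ(k_{n+1})/φ(k_n) → 1 and (1/φ(k_n))·∑_{k=k_{n-1}+1}^{k_n} |a_k| → 0. Defining k_{i_n} := min{k_i : k_i ≥ n}, one has (1/φ(n))∑_{k=0}^n a_k − (1/φ(k_{i_n}))∑_{k=0}^{k_{i_n}} a_k → 0 as n → ∞. -/

import Mathlib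

open Filter

/-- Subsequence summation lemma: let `φ : ℕ → ℝ` be increasing, strictly positive and tending
to infinity, let `a` be a real sequence whose `φ`-normalized absolute partial sums are bounded,
and let `k` be a strictly increasing sequence of positive integers such that
`φ (k (n+1)) / φ (k n) → 1` and the normalized sums over the gaps tend to `0`.  Writing
`k (sInf {i | n ≤ k i})` for the least element of the subsequence that is `≥ n`, the normalized
partial sum up to `n` differs from the one up to `k (sInf {i | n ≤ k i})` by `o(1)`. -/
theorem stmt_4 (φ : ℕ → ℝ) (hφpos : ∀ n, 0 < φ n) (hφmono : Monotone φ)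
    (hφdiv : Tendsto φ atTop atTop)
    (a : ℕ → ℝ)
    (habdd : ∃ C : ℝ, ∀ n, (∑ j ∈ Finset.range (n + 1), |a j|) / φ n ≤ C)
    (k : ℕ → ℕ) (hk : StrictMono k) (hkpos : ∀ i, 0 < k i)
    (hkratio : Tendsto (fun n => φ (k (n + 1)) / φ (k n)) atTop (nhds 1))
    (hgap : Tendsto (fun n => (∑ j ∈ Finset.Ioc (k n) (k (n + 1)), |a j|) / φ (k (n + 1)))
      atTop (nhds 0)) :
    Tendsto (fun n =>
        (∑ j ∈ Finset.range (n + 1), a j) / φ n -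
        (∑ j ∈ Finset.range (k (sInf {i | n ≤ k i}) + 1), a j) / φ (k (sInf {i | n ≤ k i})))
      atTop (nhds 0) := by
  obtain ⟨C, hC⟩ := habdd
  set C' := max C 0 with hC'def
  have hC'0 : (0:ℝ) ≤ C' := le_max_right _ _
  have hC' : ∀ n, (∑ j ∈ Finset.range (n + 1), |a j|) / φ n ≤ C' :=
    fun n => (hC n).trans (le_max_left _ _)
  set I : ℕ → ℕ := fun n => sInf {i | n ≤ k i} with hIdef
  have hne : ∀ n, {i | n ≤ k i}.Nonempty := fun n => ⟨n, hk.le_apply⟩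
  have hIn : ∀ n, n ≤ k (I n) := fun n => Nat.sInf_mem (hne n)
  have hIlt : ∀ n, 1 ≤ I n → k (I n - 1) < n := by
    intro n h
    have h3 : I n - 1 < I n := by omega
    have h2 : I n - 1 ∉ {i | n ≤ k i} := Nat.notMem_of_lt_sInf h3
    simpa using Nat.lt_of_not_le h2
  have hItop : Tendsto I atTop atTop := by
    apply tendsto_atTop.2
    intro M
    filter_upwards [eventually_ge_atTop (k M + 1)] with n hn
    by_contra h
    push_neg at h
    have h1 := hIn n
    have h2 : k (I n) < k M := hk h
    omega
  -- the squeezing function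
  set g : ℕ → ℝ := fun p => C' * (1 - φ (k p) / φ (k (p + 1))) +
    (∑ j ∈ Finset.Ioc (k p) (k (p + 1)), |a j|) / φ (k (p + 1)) with hgdef
  have hg : Tendsto g atTop (nhds 0) := by
    have h1 : Tendsto (fun p => φ (k p) / φ (k (p + 1))) atTop (nhds 1) := by
      have := hkratio.inv₀ one_ne_zero
      simpa [inv_div] using this
    have h2 : Tendsto g atTop (nhds (C' * (1 - 1) + 0)) :=
      ((tendsto_const_nhds.sub h1).const_mul C').add hgap
    simpa using h2
  have hcomp : Tendsto (fun n => g (I n - 1)) atTop (nhds 0) :=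
    hg.comp ((tendsto_sub_atTop_nat 1).comp hItop)
  apply squeeze_zero_norm' _ hcomp
  filter_upwards [eventually_ge_atTop (k 0 + 1), hItop.eventually (eventually_ge_atTop 1)]
    with n hn hI1
  set p := I n - 1 with hpdef
  have hpI : p + 1 = I n := by omega
  have hkpn : k p < n := hIlt n hI1
  set m := k (I n) with hmdef
  have hnm : n ≤ m := hIn n
  have hφn : (0:ℝ) < φ n := hφpos n
  have hφm : (0:ℝ) < φ m := hφpos m
  have hφnm : φ n ≤ φ m := hφmono hnm
  have hφkp : φ (k p) ≤ φ n := hφmono hkpn.le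
  -- decompose the sum
  have hsum : ∑ j ∈ Finset.range (m + 1), a j =
      ∑ j ∈ Finset.range (n + 1), a j + ∑ j ∈ Finset.Ioc n m, a j := by
    rw [Finset.range_eq_Ico, Finset.range_eq_Ico, ← Finset.Ico_add_one_add_one_eq_Ioc]
    exact (Finset.sum_Ico_consecutive a (Nat.zero_le _) (by omega)).symm
  set S := ∑ j ∈ Finset.range (n + 1), a j with hSdef
  set T := ∑ j ∈ Finset.Ioc n m, a j with hTdef
  have key : S / φ n - (S + T) / φ m =
      (S / φ n) * (1 - φ n / φ m) - T / φ m := by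
    field_simp
    ring
  rw [hsum, key]
  have habs1 : |S / φ n| ≤ C' := by
    rw [abs_div, abs_of_pos hφn]
    refine (div_le_div_of_nonneg_right ?_ hφn.le).trans (hC' n)
    exact Finset.abs_sum_le_sum_abs _ _
  have hfac0 : (0:ℝ) ≤ 1 - φ n / φ m := by
    rw [sub_nonneg]
    exact div_le_one_of_le₀ hφnm hφm.le
  have hfac : 1 - φ n / φ m ≤ 1 - φ (k p) / φ (k (p + 1)) := by
    rw [hpI]
    exact sub_le_sub_left (div_le_div_of_nonneg_right hφkp hφm.le) _
  have hterm1 : |(S / φ n) * (1 - φ n / φ m)| ≤ C' * (1 - φ (k p) / φ (k (p + 1))) := by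
    rw [abs_mul, abs_of_nonneg hfac0]
    exact mul_le_mul habs1 hfac hfac0 hC'0
  have hterm2 : |T / φ m| ≤ (∑ j ∈ Finset.Ioc (k p) (k (p + 1)), |a j|) / φ (k (p + 1)) := by
    rw [abs_div, abs_of_pos hφm, hpI]
    refine div_le_div_of_nonneg_right ?_ hφm.le
    refine (Finset.abs_sum_le_sum_abs _ _).trans ?_
    refine Finset.sum_le_sum_of_subset_of_nonneg ?_ (fun j _ _ => abs_nonneg _)
    exact Finset.Ioc_subset_Ioc_left hkpn.le
  calc ‖(S / φ n) * (1 - φ n / φ m) - T / φ m‖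
      ≤ |(S / φ n) * (1 - φ n / φ m)| + |T / φ m| := by
        rw [Real.norm_eq_abs]; exact abs_sub _ _
    _ ≤ g p := add_le_add hterm1 hterm2
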